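/- The canonical action model is locally finite: for each simple action α (a term built from basic actions σ_i ψ⃗ by binary composition), the set of simple actions β reachable from α via →*_Agents (the reflexive-transitive closure of the union of all agent accessibility relations) is finite, given that the action signature Σ is finite. -/
import Mathlib


/-- Simple actions: basic actions `σᵢ ψ⃗` (a signature action type together with
a tuple of sentences), `skip`, `crash`, and compositions. -/
inductive SimpleAct (SigAct Sent : Type) (n : ℕ) : Type
  | skip : SimpleAct SigAct Sent n
  | crash : SimpleAct SigAct Sent n
  | basic : SigAct → (Fin n → Sent) → SimpleAct SigAct Sent n
  | comp : SimpleAct SigAct Sent n → SimpleAct SigAct Sent n → SimpleAct SigAct Sent n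

/-- The accessibility relations of the canonical action model: the least
relations with `skip →_A skip`, `σᵢψ⃗ →_A σⱼψ⃗` iff `σᵢ →_A σⱼ` in the
signature, and closed under composition. -/
inductive ARel {Agent SigAct Sent : Type} {n : ℕ}
    (srel : Agent → SigAct → SigAct → Prop) (A : Agent) :
    SimpleAct SigAct Sent n → SimpleAct SigAct Sent n → Prop
  | skip : ARel srel A SimpleAct.skip SimpleAct.skip
  | basic (i j : SigAct) (ψ : Fin n → Sent) :
      srel A i j → ARel srel A (SimpleAct.basic i ψ) (SimpleAct.basic j ψ)
  | comp {α α' β β' : SimpleAct SigAct Sent n} :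
      ARel srel A α α' → ARel srel A β β' →
      ARel srel A (SimpleAct.comp α β) (SimpleAct.comp α' β')

/-- The "envelope" of a simple action: all actions of the same shape with
arbitrary signature actions at the basic positions. -/
def SimpleAct.env {SigAct Sent : Type} {n : ℕ} :
    SimpleAct SigAct Sent n → Set (SimpleAct SigAct Sent n)
  | .skip => {SimpleAct.skip}
  | .crash => {SimpleAct.crash}
  | .basic _ ψ => Set.range (fun j => SimpleAct.basic j ψ)
  | .comp a b => Set.image2 SimpleAct.comp a.env b.env

theorem SimpleAct.env_finite {SigAct Sent : Type} {n : ℕ} [Fintype SigAct]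
    (α : SimpleAct SigAct Sent n) : α.env.Finite := by
  induction α with
  | skip => exact Set.finite_singleton _
  | crash => exact Set.finite_singleton _
  | basic i ψ => exact Set.finite_range _
  | comp a b iha ihb => exact Set.Finite.image2 _ iha ihb

theorem SimpleAct.mem_env_self {SigAct Sent : Type} {n : ℕ}
    (α : SimpleAct SigAct Sent n) : α ∈ α.env := by
  induction α with
  | skip => exact rfl
  | crash => exact rfl
  | basic i ψ => exact ⟨i, rfl⟩
  | comp a b iha ihb => exact Set.mem_image2_of_mem iha ihb

theorem SimpleAct.env_closed {Agent SigAct Sent : Type} {n : ℕ}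
    {srel : Agent → SigAct → SigAct → Prop} {A : Agent}
    (α : SimpleAct SigAct Sent n) :
    ∀ β γ, β ∈ α.env → ARel srel A β γ → γ ∈ α.env := by
  induction α with
  | skip =>
      rintro β γ rfl h
      cases h; rfl
  | crash =>
      rintro β γ rfl h
      cases h
  | basic i ψ =>
      rintro β γ ⟨j, rfl⟩ h
      cases h with
      | basic _ k _ _ => exact ⟨k, rfl⟩
  | comp a b iha ihb =>
      rintro β γ ⟨b1, hb1, b2, hb2, rfl⟩ h
      cases h with
      | comp h1 h2 =>
          exact Set.mem_image2_of_mem (iha _ _ hb1 h1) (ihb _ _ hb2 h2)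

/-- The canonical action model is locally finite: if the action signature is
finite, then for each simple action `α` only finitely many simple actions are
reachable from `α` via the reflexive-transitive closure of the union of all the
agents' accessibility relations. -/
theorem canonical_action_model_locally_finite {Agent SigAct Sent : Type} {n : ℕ}
    [Fintype SigAct] (srel : Agent → SigAct → SigAct → Prop)
    (α : SimpleAct SigAct Sent n) :
    {β | Relation.ReflTransGen
        (fun a b => ∃ A : Agent, ARel (Sent := Sent) (n := n) srel A a b) α β}.Finite := by
  apply (SimpleAct.env_finite α).subset
  intro β hβ
  induction hβ with
  | refl => exact α.mem_env_self
  | tail _ h ih =>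
      obtain ⟨A, hA⟩ := h
      exact SimpleAct.env_closed α _ _ ih hA
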